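/- Define p*(α) = (2^α(3+α) − 4 − 2α)/(2 + 2^α(α−1)). Then p*(α) > 1 for all α > 1, and p*(α) < 2α for all α > 1/2. -/

import Mathlib

open Real

/-- The critical power `p*(α) = (2^α(3+α) − 4 − 2α)/(2 + 2^α(α−1))`. -/
noncomputable def pstar (α : ℝ) : ℝ :=
  ((2 : ℝ) ^ α * (3 + α) - 4 - 2 * α) / (2 + (2 : ℝ) ^ α * (α - 1))

lemma secant_two_rpow (a b α : ℝ) (hab : a < b) (h1 : a ≤ α) (h2 : α ≤ b) :
    (b - a) * (2:ℝ) ^ α ≤ (b - α) * (2:ℝ) ^ a + (α - a) * (2:ℝ) ^ b := by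
  have hba : (0:ℝ) < b - a := by linarith
  have hw1 : (0:ℝ) ≤ (b - α)/(b-a) := by apply div_nonneg <;> linarith
  have hw2 : (0:ℝ) ≤ (α - a)/(b-a) := by apply div_nonneg <;> linarith
  have hw : (b - α)/(b-a) + (α - a)/(b-a) = 1 := by field_simp; ring
  have key := convexOn_exp.2 (Set.mem_univ (a * Real.log 2)) (Set.mem_univ (b * Real.log 2))
    hw1 hw2 hw
  simp only [smul_eq_mul] at key
  have hcomb : (b - α)/(b-a) * (a * Real.log 2) + (α - a)/(b-a) * (b * Real.log 2)
      = α * Real.log 2 := by field_simp; ring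
  rw [hcomb] at key
  have e1 : Real.exp (α * Real.log 2) = (2:ℝ) ^ α := by
    rw [Real.rpow_def_of_pos (by norm_num : (0:ℝ) < 2)]; ring_nf
  have e2 : Real.exp (a * Real.log 2) = (2:ℝ) ^ a := by
    rw [Real.rpow_def_of_pos (by norm_num : (0:ℝ) < 2)]; ring_nf
  have e3 : Real.exp (b * Real.log 2) = (2:ℝ) ^ b := by
    rw [Real.rpow_def_of_pos (by norm_num : (0:ℝ) < 2)]; ring_nf
  rw [e1, e2, e3] at key
  have := mul_le_mul_of_nonneg_left key hba.le
  calc (b - a) * (2:ℝ) ^ α ≤ (b-a) * ((b - α)/(b-a) * (2:ℝ)^a + (α - a)/(b-a) * (2:ℝ)^b) := this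
    _ = (b - α) * (2:ℝ) ^ a + (α - a) * (2:ℝ) ^ b := by field_simp

theorem stmt5 :
    (∀ α : ℝ, 1 < α → 1 < pstar α) ∧ (∀ α : ℝ, 1 / 2 < α → pstar α < 2 * α) := by
  have hr0 : (2:ℝ) ^ (0:ℝ) = 1 := rpow_zero 2
  have hr1 : (2:ℝ) ^ (1:ℝ) = 2 := rpow_one 2
  have hr2 : (2:ℝ) ^ (2:ℝ) = 4 := by
    rw [show (2:ℝ) = ((2:ℕ):ℝ) by norm_num, rpow_natCast]; norm_num
  have hr3 : (2:ℝ) ^ (3:ℝ) = 8 := by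
    rw [show (3:ℝ) = ((3:ℕ):ℝ) by norm_num, rpow_natCast]; norm_num
  have hpos : ∀ α : ℝ, (0:ℝ) < (2:ℝ) ^ α := fun α => rpow_pos_of_pos (by norm_num) α
  have hden : ∀ α : ℝ, 1/2 < α → 0 < 2 + (2:ℝ) ^ α * (α - 1) := by
    intro α hα
    rcases le_or_gt 1 α with h | h
    · nlinarith [hpos α]
    · have := secant_two_rpow 0 1 α (by norm_num) (by linarith) h.le
      rw [hr0, hr1] at this
      nlinarith [hpos α]
  constructor
  · intro α hα
    have hD := hden α (by linarith)
    rw [pstar, lt_div_iff₀ hD]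
    -- need 2 + 2^α (α-1) < 2^α (3+α) - 4 - 2α, i.e. 6 + 2α < 4·2^α
    have hb : 1 + α * 1 ≤ (1 + 1 : ℝ) ^ α :=
      one_add_mul_self_le_rpow_one_add (by norm_num) hα.le
    norm_num at hb
    nlinarith
  · intro α hα
    have hD := hden α hα
    rw [pstar, div_lt_iff₀ hD]
    -- need 2^α (3+3α-2α²) < 4 + 6α
    rcases le_or_gt (3 + 3*α - 2*α^2) 0 with hq | hq
    · nlinarith [hpos α, mul_nonpos_of_nonneg_of_nonpos (hpos α).le hq]
    · rcases le_or_gt α 1 with h1 | h1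
      · have := secant_two_rpow 0 1 α (by norm_num) (by linarith) h1
        rw [hr0, hr1] at this
        nlinarith [hpos α]
      · rcases le_or_gt α 2 with h2 | h2
        · have := secant_two_rpow 1 2 α (by norm_num) h1.le h2
          rw [hr1, hr2] at this
          nlinarith
        · have h3 : α < 3 := by nlinarith
          have := secant_two_rpow 2 3 α (by norm_num) h2.le h3.le
          rw [hr2, hr3] at this
          nlinarith
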